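/- Let F be a finite field of odd cardinality and consider the affine plane with point set F × F, whose lines are the affine lines {a + t • d | t ∈ F} for a, d ∈ F × F with d ≠ 0. Then every configuration c : F × F → ZMod 2 can be reduced to 0 lit bulbs: there exists a finite set S of lines whose ZMod 2 indicator functions sum to c. Equivalently, the ZMod 2 span of the indicator functions of the affine lines is all of (F × F) → ZMod 2. -/

import Mathlib

open scoped Classical

/-- The affine line in `F × F` through the point `a` with direction `d`. -/
def affLine {F : Type*} [Field F] (a d : F × F) : Set (F × F) :=
  {x : F × F | ∃ t : F, x = a + t • d}

section Aux

variable {F : Type*} [Field F] [Fintype F]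

set_option linter.unusedSectionVars false in
lemma mem_affLine_iff (a d x : F × F) : x ∈ affLine a d ↔ ∃ t : F, x = a + t • d :=
  Iff.rfl

/-- Canonical set of directions: `(1, m)` for all `m`, plus `(0, 1)`. -/
noncomputable def Dirs (F : Type*) [Field F] [Fintype F] : Finset (F × F) :=
  insert ((0:F), (1:F)) (Finset.univ.image fun m : F => ((1:F), m))

lemma not_mem_image_Dirs : ((0:F), (1:F)) ∉ Finset.univ.image (fun m : F => ((1:F), m)) := by
  simp [Prod.ext_iff]

lemma card_Dirs : (Dirs F).card = Fintype.card F + 1 := by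
  rw [Dirs, Finset.card_insert_of_notMem not_mem_image_Dirs,
    Finset.card_image_of_injective _ (fun a b h => by simpa using h), Finset.card_univ]

lemma dirs_ne_zero {d : F × F} (hd : d ∈ Dirs F) : d ≠ 0 := by
  rw [Dirs, Finset.mem_insert] at hd
  rcases hd with h | h
  · subst h; simp [Prod.ext_iff]
  · simp only [Finset.mem_image] at h
    obtain ⟨m, -, rfl⟩ := h
    simp [Prod.ext_iff]

lemma exists_unique_dir (p x : F × F) (h : x ≠ p) :
    ∃! d, d ∈ Dirs F ∧ x ∈ affLine p d := by
  have hv : x - p ≠ 0 := sub_ne_zero.mpr h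
  have key : ∀ d t : F × F → Prop, True := fun _ _ => trivial
  by_cases h1 : (x - p).1 = 0
  · have h2 : (x - p).2 ≠ 0 := by
      intro h2
      exact hv (Prod.ext h1 h2)
    refine ⟨((0:F), (1:F)), ⟨Finset.mem_insert_self _ _, ⟨(x - p).2, ?_⟩⟩, ?_⟩
    · have : x = p + (x - p) := by ring
      rw [this]
      refine congrArg (p + ·) (Prod.ext ?_ ?_) <;> simp [h1]
    · rintro d ⟨hd, t, hx⟩
      have hv' : x - p = t • d := by rw [hx, add_sub_cancel_left]
      rw [Dirs, Finset.mem_insert] at hd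
      rcases hd with rfl | hd
      · rfl
      · simp only [Finset.mem_image] at hd
        obtain ⟨m, -, rfl⟩ := hd
        exfalso
        have : (x - p).1 = t * 1 := by rw [hv']; rfl
        rw [h1] at this
        have ht : t = 0 := by linear_combination -this
        rw [ht, zero_smul] at hv'
        exact hv hv'
  · refine ⟨((1:F), (x - p).2 / (x - p).1),
      ⟨Finset.mem_insert_of_mem (Finset.mem_image_of_mem _ (Finset.mem_univ _)),
        ⟨(x - p).1, ?_⟩⟩, ?_⟩
    · refine Prod.ext ?_ ?_
      · show x.1 = p.1 + (x - p).1 * 1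
        simp
      · show x.2 = p.2 + (x - p).1 * ((x - p).2 / (x - p).1)
        have h1' : x.1 - p.1 ≠ 0 := h1
        simp only [Prod.fst_sub, Prod.snd_sub]
        field_simp
        ring
    · rintro d ⟨hd, t, hx⟩
      have hv' : x - p = t • d := by rw [hx, add_sub_cancel_left]
      rw [Dirs, Finset.mem_insert] at hd
      rcases hd with rfl | hd
      · exfalso
        have : (x - p).1 = t * 0 := by rw [hv']; rfl
        rw [mul_zero] at this
        exact h1 this
      · simp only [Finset.mem_image] at hd
        obtain ⟨m, -, rfl⟩ := hd
        have e1 : (x - p).1 = t * 1 := by rw [hv']; rfl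
        have e2 : (x - p).2 = t * m := by rw [hv']; rfl
        rw [mul_one] at e1
        refine Prod.ext rfl ?_
        show m = (x - p).2 / (x - p).1
        rw [eq_div_iff h1, e2, e1]
        ring

end Aux

/-- On the affine plane over a finite field of odd cardinality, every configuration can
be reduced to zero lit bulbs: there is a finite set of lines whose mod-2 indicator
functions sum to the configuration. -/
theorem stmt_13 {F : Type*} [Field F] [Fintype F]
    (hodd : Odd (Fintype.card F)) (c : F × F → ZMod 2) :
    ∃ S : Finset (Set (F × F)),
      (∀ ℓ ∈ S, ∃ a d : F × F, d ≠ 0 ∧ ℓ = affLine a d) ∧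
      ∀ x : F × F, (∑ ℓ ∈ S, if x ∈ ℓ then (1 : ZMod 2) else 0) = c x := by
  classical
  set ind : Set (F × F) → (F × F) → ZMod 2 :=
    fun ℓ x => if x ∈ ℓ then 1 else 0 with hind
  set L : Set ((F × F) → ZMod 2) :=
    {f | ∃ a d : F × F, d ≠ 0 ∧ f = ind (affLine a d)} with hL
  -- sum over the pencil of lines through p
  have pencil : ∀ p x : F × F,
      (∑ d ∈ Dirs F, ind (affLine p d) x) = if x = p then 0 else 1 := by
    intro p x
    have : (∑ d ∈ Dirs F, ind (affLine p d) x)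
        = (((Dirs F).filter (fun d => x ∈ affLine p d)).card : ZMod 2) := by
      rw [Finset.sum_boole]
    rw [this]
    by_cases hxp : x = p
    · subst hxp
      have hfil : (Dirs F).filter (fun d => x ∈ affLine x d) = Dirs F := by
        apply Finset.filter_true_of_mem
        intro d _
        exact ⟨0, by simp⟩
      rw [hfil, if_pos rfl, card_Dirs]
      have : (2 : ℕ) ∣ Fintype.card F + 1 := by
        obtain ⟨k, hk⟩ := hodd
        exact ⟨k + 1, by omega⟩
      rw [show ((Fintype.card F + 1 : ℕ) : ZMod 2) = 0 from
        (ZMod.natCast_eq_zero_iff _ _).mpr this]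
    · obtain ⟨d₀, hd₀, hu⟩ := exists_unique_dir p x hxp
      have hfil : (Dirs F).filter (fun d => x ∈ affLine p d) = {d₀} := by
        apply Finset.eq_singleton_iff_unique_mem.mpr
        constructor
        · exact Finset.mem_filter.mpr ⟨hd₀.1, hd₀.2⟩
        · intro d hd
          rw [Finset.mem_filter] at hd
          exact hu d hd
      rw [hfil, if_neg hxp]
      simp
  -- sum over all horizontal lines
  have horiz : ∀ x : F × F,
      (∑ b : F, ind (affLine ((0:F), b) ((1:F), (0:F))) x) = 1 := by
    intro x
    have hmem : ∀ b : F, x ∈ affLine ((0:F), b) ((1:F), (0:F)) ↔ x.2 = b := by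
      intro b
      constructor
      · rintro ⟨t, rfl⟩; simp
      · intro hb
        exact ⟨x.1, Prod.ext (by simp) (by simp [hb])⟩
    have : (∑ b : F, ind (affLine ((0:F), b) ((1:F), (0:F))) x)
        = ∑ b : F, if x.2 = b then (1 : ZMod 2) else 0 := by
      apply Finset.sum_congr rfl
      intro b _
      simp only [hind, hmem b]
    rw [this, Finset.sum_ite_eq Finset.univ x.2 (fun _ => (1 : ZMod 2))]
    simp
  -- each delta function is in the span of line indicators
  have hδ : ∀ p : F × F,
      (fun x => if x = p then (1 : ZMod 2) else 0) ∈ Submodule.span (ZMod 2) L := by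
    intro p
    have hfun : (fun x => if x = p then (1 : ZMod 2) else 0)
        = (∑ d ∈ Dirs F, ind (affLine p d)) + (∑ b : F, ind (affLine ((0:F), b) ((1:F), (0:F)))) := by
      funext x
      rw [Pi.add_apply, Finset.sum_apply, Finset.sum_apply, pencil p x, horiz x]
      by_cases hxp : x = p
      · simp [hxp]
      · simp only [if_neg hxp]
        decide
    rw [hfun]
    apply Submodule.add_mem
    · apply Submodule.sum_mem
      intro d hd
      exact Submodule.subset_span ⟨p, d, dirs_ne_zero hd, rfl⟩
    · apply Submodule.sum_mem
      intro b _
      exact Submodule.subset_span ⟨((0:F), b), ((1:F), (0:F)), by simp [Prod.ext_iff], rfl⟩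
  -- hence c is in the span
  have hc : c ∈ Submodule.span (ZMod 2) L := by
    have hcsum : c = ∑ p : F × F, c p • (fun x => if x = p then (1 : ZMod 2) else 0) := by
      funext x
      rw [Finset.sum_apply]
      simp only [Pi.smul_apply, smul_eq_mul, mul_ite, mul_one, mul_zero]
      rw [Finset.sum_ite_eq Finset.univ x c]
      simp
    rw [hcsum]
    exact Submodule.sum_mem _ fun p _ => Submodule.smul_mem _ _ (hδ p)
  rw [Submodule.mem_span_set] at hc
  obtain ⟨μ, hsupp, hsum⟩ := hc
  -- every element of ZMod 2 is 0 or 1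
  have two : ∀ a : ZMod 2, a = 0 ∨ a = 1 := by decide
  -- the map taking an indicator function to its set of ones
  have toSet_ind : ∀ ℓ : Set (F × F), {x | ind ℓ x = 1} = ℓ := by
    intro ℓ
    ext x
    simp only [hind, Set.mem_setOf_eq]
    split <;> simp_all
  have inj : ∀ f g : (F × F) → ZMod 2, {x | f x = 1} = {x | g x = 1} → f = g := by
    intro f g hfg
    funext x
    have := Set.ext_iff.mp hfg x
    simp only [Set.mem_setOf_eq] at this
    rcases two (f x) with h | h <;> rcases two (g x) with h' | h' <;> simp_all
  refine ⟨μ.support.image (fun f => {x | f x = 1}), ?_, ?_⟩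
  · intro ℓ hℓ
    simp only [Finset.mem_image] at hℓ
    obtain ⟨f, hf, rfl⟩ := hℓ
    obtain ⟨a, d, hd, hfad⟩ := hsupp hf
    exact ⟨a, d, hd, by rw [hfad, toSet_ind]⟩
  · intro x
    rw [Finset.sum_image (fun f hf g hg h => inj f g h)]
    simp only [Set.mem_setOf_eq]
    have e2 : (∑ f ∈ μ.support, f x) = (μ.sum fun mi r => r • mi) x := by
      rw [Finsupp.sum, Finset.sum_apply]
      apply Finset.sum_congr rfl
      intro f hf
      rcases two (μ f) with h | h
      · exact absurd h (Finsupp.mem_support_iff.mp hf)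
      · simp [h]
    refine Eq.trans (Finset.sum_congr rfl (fun f _ => ?_)) (e2.trans (by rw [hsum]))
    rcases two (f x) with h | h <;> simp [h]
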